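/- Let g be analytic near 0 with g(0)=0, g'(0)=1, g''(0)=0, g'''(0) < 0 and let G(x)=∫₀ˣ g(t)dt. If g(x)² - 2G(x)g'(x) + (g⁗(0)/5) g(x)³ G(x) > 0 for all x ≠ 0 in a punctured neighborhood of 0 with x g(x) > 0, then x·d/dx(g(x)/x) < 0 on that punctured neighborhood (for x sufficiently small). -/

import Mathlib

open Filter

set_option maxHeartbeats 1000000 in
theorem prop22_increasing (g : ℝ → ℝ) (hg : AnalyticAt ℝ g 0)
    (h0 : g 0 = 0) (h1 : deriv g 0 = 1)
    (h2 : iteratedDeriv 2 g 0 = 0) (h3 : iteratedDeriv 3 g 0 < 0)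
    (G : ℝ → ℝ) (hG : ∀ x, G x = ∫ t in (0:ℝ)..x, g t)
    (hsign : ∀ᶠ x in nhdsWithin 0 {(0:ℝ)}ᶜ, 0 < x * g x)
    (hyp : ∀ᶠ x in nhdsWithin 0 {(0:ℝ)}ᶜ,
      g x ^ 2 - 2 * G x * deriv g x + (iteratedDeriv 4 g 0 / 5) * g x ^ 3 * G x > 0) :
    ∀ᶠ x in nhdsWithin 0 {(0:ℝ)}ᶜ, x * deriv (fun y => g y / y) x < 0 := by
  obtain ⟨p, hp⟩ := hg
  obtain ⟨r, hpb⟩ := hp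
  set A : ℝ := iteratedDeriv 3 g 0 / 6 with hA_def
  have hA : A < 0 := by
    rw [hA_def]; linarith
  set c : ℝ := iteratedDeriv 4 g 0 with hc_def
  -- coefficients of the power series
  have hcoeff : ∀ n : ℕ, (Nat.factorial n : ℝ) * p.coeff n = iteratedDeriv n g 0 := by
    intro n
    have h := hpb.factorial_smul (1:ℝ) n
    rw [FormalMultilinearSeries.apply_eq_pow_smul_coeff, one_pow, one_smul,
      nsmul_eq_mul] at h
    rw [iteratedDeriv_eq_iteratedFDeriv, ← h]
  have hc0 : p.coeff 0 = 0 := by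
    have := hcoeff 0; simp [iteratedDeriv_zero, h0] at this; simpa using this
  have hc1 : p.coeff 1 = 1 := by
    have := hcoeff 1; simp [iteratedDeriv_one, h1] at this; simpa using this
  have hc2 : p.coeff 2 = 0 := by
    have := hcoeff 2; rw [h2] at this
    have h2' : (Nat.factorial 2 : ℝ) ≠ 0 := by norm_num [Nat.factorial]
    field_simp at this; norm_num [Nat.factorial] at this; linarith
  have hc3 : p.coeff 3 = A := by
    have := hcoeff 3
    have : (6:ℝ) * p.coeff 3 = iteratedDeriv 3 g 0 := by
      norm_num [Nat.factorial] at this ⊢; linarith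
    rw [hA_def]; linarith
  have hps : ∀ y : ℝ, p.partialSum 4 y = y + A * y^3 := by
    intro y
    simp [FormalMultilinearSeries.partialSum, Finset.sum_range_succ,
      FormalMultilinearSeries.apply_eq_pow_smul_coeff, smul_eq_mul, hc0, hc1, hc2, hc3]
    ring
  -- Taylor estimate for g
  have hO := hpb.hasFPowerSeriesAt.isBigO_sub_partialSum_pow 4
  rw [Asymptotics.isBigO_iff] at hO
  obtain ⟨C, hC⟩ := hO
  set C₀ : ℝ := max C 1 with hC₀_def
  have hC₀pos : 0 < C₀ := lt_of_lt_of_le one_pos (le_max_right _ _)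
  have hC' : ∀ᶠ y in nhds (0:ℝ), |g y - (y + A * y^3)| ≤ C₀ * |y|^4 := by
    filter_upwards [hC] with y hy
    rw [zero_add, hps y] at hy
    calc |g y - (y + A * y^3)| ≤ C * ‖‖y‖^4‖ := hy
      _ ≤ C₀ * |y|^4 := by
          rw [Real.norm_eq_abs, Real.norm_eq_abs, abs_of_nonneg (by positivity)]
          exact mul_le_mul_of_nonneg_right (le_max_left _ _) (by positivity)
  obtain ⟨δ₁, hδ₁pos, hδ₁⟩ := Metric.eventually_nhds_iff.mp hC'
  simp only [Real.dist_eq, sub_zero] at hδ₁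
  -- analyticity near 0
  obtain ⟨δ₂, hδ₂pos, hδ₂⟩ := Metric.eventually_nhds_iff.mp
    (AnalyticAt.eventually_analyticAt ⟨p, r, hpb⟩)
  simp only [Real.dist_eq, sub_zero] at hδ₂
  -- sign hypothesis in metric form
  rw [eventually_nhdsWithin_iff] at hsign hyp
  obtain ⟨δ₃, hδ₃pos, hδ₃⟩ := Metric.eventually_nhds_iff.mp hsign
  simp only [Real.dist_eq, sub_zero, Set.mem_compl_iff, Set.mem_singleton_iff] at hδ₃
  obtain ⟨δ₄, hδ₄pos, hδ₄⟩ := Metric.eventually_nhds_iff.mp hyp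
  simp only [Real.dist_eq, sub_zero, Set.mem_compl_iff, Set.mem_singleton_iff] at hδ₄
  -- helper: membership in uIcc 0 x bounds abs
  have habs : ∀ x t : ℝ, t ∈ Set.uIcc 0 x → |t| ≤ |x| := by
    intro x t ht
    rcases le_total 0 x with hx | hx
    · rw [Set.uIcc_of_le hx] at ht
      rw [abs_of_nonneg ht.1, abs_of_nonneg hx]; exact ht.2
    · rw [Set.uIcc_of_ge hx] at ht
      rw [abs_of_nonpos ht.2, abs_of_nonpos hx]; linarith [ht.1]
  -- integrability
  have hint : ∀ x : ℝ, |x| < δ₂ → IntervalIntegrable g MeasureTheory.volume 0 x := by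
    intro x hx
    apply ContinuousOn.intervalIntegrable
    intro t ht
    exact ((hδ₂ (lt_of_le_of_lt (habs x t ht) hx)).continuousAt).continuousWithinAt
  -- estimate for G
  have hGest : ∀ x : ℝ, |x| < δ₁ → |x| < δ₂ →
      |G x - (x^2/2 + A * x^4/4)| ≤ C₀ * |x|^5 := by
    intro x hx1 hx2
    have hpoly : IntervalIntegrable (fun t : ℝ => t + A * t^3) MeasureTheory.volume 0 x :=
      (Continuous.intervalIntegrable (by fun_prop) 0 x)
    have heq : G x - (x^2/2 + A * x^4/4) = ∫ t in (0:ℝ)..x, (g t - (t + A * t^3)) := by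
      rw [intervalIntegral.integral_sub (hint x hx2) hpoly, hG]
      have : (∫ t in (0:ℝ)..x, (t + A * t^3)) = x^2/2 + A * x^4/4 := by
        rw [intervalIntegral.integral_add (Continuous.intervalIntegrable (by fun_prop) 0 x)
          (Continuous.intervalIntegrable (by fun_prop) 0 x)]
        rw [integral_id, intervalIntegral.integral_const_mul,
          integral_pow]
        norm_num
        ring
      rw [this]
    rw [heq]
    have hb : ∀ t ∈ Set.uIoc (0:ℝ) x, ‖g t - (t + A * t^3)‖ ≤ C₀ * |x|^4 := by
      intro t ht
      have htx : |t| ≤ |x| := habs x t (Set.uIoc_subset_uIcc ht)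
      calc ‖g t - (t + A * t^3)‖ ≤ C₀ * |t|^4 := hδ₁ (lt_of_le_of_lt htx hx1)
        _ ≤ C₀ * |x|^4 := by
            apply mul_le_mul_of_nonneg_left _ hC₀pos.le
            exact pow_le_pow_left₀ (abs_nonneg t) htx 4
    calc |∫ t in (0:ℝ)..x, (g t - (t + A * t^3))| ≤ C₀ * |x|^4 * |x - 0| :=
        intervalIntegral.norm_integral_le_of_norm_le_const hb
      _ = C₀ * |x|^5 := by rw [sub_zero]; ring
  -- positivity of G
  have hGpos : ∀ x : ℝ, x ≠ 0 → |x| < δ₂ → |x| < δ₃ → 0 < G x := by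
    intro x hx0 hx2 hx3
    rcases lt_or_gt_of_ne hx0 with hneg | hpos
    · -- x < 0
      have hsymm : IntervalIntegrable g MeasureTheory.volume x 0 := (hint x hx2).symm
      have hposneg : 0 < ∫ t in x..(0:ℝ), (fun t => -g t) t := by
        apply intervalIntegral.intervalIntegral_pos_of_pos_on hsymm.neg
        · intro t ht
          have htabs : |t| < δ₃ := by
            rw [abs_of_neg ht.2]; rw [abs_of_neg hneg] at hx3; linarith [ht.1]
          have := hδ₃ htabs (ne_of_lt ht.2)
          have ht2 := ht.2
          show 0 < -g t
          nlinarith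
        · exact hneg
      rw [intervalIntegral.integral_neg] at hposneg
      rw [hG, intervalIntegral.integral_symm]
      linarith
    · -- x > 0
      rw [hG]
      apply intervalIntegral.intervalIntegral_pos_of_pos_on (hint x hx2)
      · intro t ht
        have htabs : |t| < δ₃ := by
          rw [abs_of_pos ht.1]; rw [abs_of_pos hpos] at hx3; linarith [ht.2]
        have := hδ₃ htabs (ne_of_gt ht.1)
        nlinarith [ht.1]
      · exact hpos
  -- choose the final radius
  set B : ℝ := -A with hB_def
  have hB : 0 < B := by rw [hB_def]; linarith
  set M : ℝ := |A| + C₀ + |c| + 1 with hM_def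
  have hM1 : 1 ≤ M := by
    have := abs_nonneg A; have := abs_nonneg c; rw [hM_def]; linarith
  have hMpos : 0 < M := lt_of_lt_of_le one_pos hM1
  set ε : ℝ := min δ₁ (min δ₂ (min δ₃ (min δ₄ (min 1 (min (1/(2*M)) (B/(16*M))))))) with hε_def
  have hεpos : 0 < ε := by
    refine lt_min hδ₁pos (lt_min hδ₂pos (lt_min hδ₃pos (lt_min hδ₄pos
      (lt_min one_pos (lt_min (by positivity) (by positivity))))))
  clear_value A c C₀ B M ε
  rw [eventually_nhdsWithin_iff, Metric.eventually_nhds_iff]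
  refine ⟨ε, hεpos, fun x hx hx0 => ?_⟩
  simp only [Real.dist_eq, sub_zero] at hx
  rw [hε_def] at hx
  simp only [Set.mem_compl_iff, Set.mem_singleton_iff] at hx0
  -- unpack smallness
  have hx1 : |x| < δ₁ := lt_of_lt_of_le hx (min_le_left _ _)
  have hx2 : |x| < δ₂ := lt_of_lt_of_le hx ((min_le_right _ _).trans (min_le_left _ _))
  have hx3 : |x| < δ₃ := lt_of_lt_of_le hx ((min_le_right _ _).trans
    ((min_le_right _ _).trans (min_le_left _ _)))
  have hx4 : |x| < δ₄ := lt_of_lt_of_le hx ((min_le_right _ _).trans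
    ((min_le_right _ _).trans ((min_le_right _ _).trans (min_le_left _ _))))
  have hx5 : |x| < 1 := lt_of_lt_of_le hx ((min_le_right _ _).trans
    ((min_le_right _ _).trans ((min_le_right _ _).trans ((min_le_right _ _).trans
    (min_le_left _ _)))))
  have hx6 : |x| ≤ 1/(2*M) := le_of_lt (lt_of_lt_of_le hx ((min_le_right _ _).trans
    ((min_le_right _ _).trans ((min_le_right _ _).trans ((min_le_right _ _).trans
    ((min_le_right _ _).trans (min_le_left _ _)))))))
  have hx7 : |x| ≤ B/(16*M) := le_of_lt (lt_of_lt_of_le hx ((min_le_right _ _).trans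
    ((min_le_right _ _).trans ((min_le_right _ _).trans ((min_le_right _ _).trans
    ((min_le_right _ _).trans (min_le_right _ _)))))))
  have hxabs : 0 < |x| := abs_pos.mpr hx0
  -- the pointwise facts
  have hE1 : |g x - (x + A * x^3)| ≤ C₀ * |x|^4 := hδ₁ hx1
  have hE2 : |G x - (x^2/2 + A * x^4/4)| ≤ C₀ * |x|^5 := hGest x hx1 hx2
  have hGx : 0 < G x := hGpos x hx0 hx2 hx3
  have hhyp : g x ^ 2 - 2 * G x * deriv g x + (c / 5) * g x ^ 3 * G x > 0 := hδ₄ hx4 hx0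
  -- basic smallness consequences
  have hAM : |A| ≤ M := by
    rw [hM_def]; have := abs_nonneg c; have := hC₀pos.le; linarith
  have hCM : C₀ ≤ M := by
    rw [hM_def]; have := abs_nonneg A; have := abs_nonneg c; linarith
  have hcM : |c| ≤ M := by
    rw [hM_def]; have := abs_nonneg A; have := hC₀pos.le; linarith
  have hMx : M * |x| ≤ 1/2 := by
    calc M * |x| ≤ M * (1/(2*M)) := mul_le_mul_of_nonneg_left hx6 hMpos.le
      _ = 1/2 := by field_simp
  have hxhalf : |x| ≤ 1/2 := by
    have h12 : (1:ℝ)/(2*M) ≤ 1/2 := by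
      rw [div_le_div_iff₀ (by positivity) (by norm_num)]; linarith only [hM1]
    linarith only [hx6, h12]
  have habs4 : |x|^4 = x^4 := by
    rw [← abs_pow]; exact abs_of_nonneg (by positivity)
  have habs2x : |x|^2 = x^2 := sq_abs x
  have hx4pos : 0 < x^4 := by
    have := pow_pos hxabs 4; rwa [habs4] at this
  have hx54 : |x|^5 ≤ |x|^4 :=
    pow_le_pow_of_le_one (abs_nonneg x) hx5.le (by norm_num)
  have hx43 : |x|^4 ≤ |x|^3 :=
    pow_le_pow_of_le_one (abs_nonneg x) hx5.le (by norm_num)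
  -- the pointwise facts
  have hE1 : |g x - (x + A * x^3)| ≤ C₀ * |x|^4 := hδ₁ hx1
  have hE2 : |G x - (x^2/2 + A * x^4/4)| ≤ C₀ * |x|^5 := hGest x hx1 hx2
  have hGx : 0 < G x := hGpos x hx0 hx2 hx3
  have hhyp : g x ^ 2 - 2 * G x * deriv g x + (c / 5) * g x ^ 3 * G x > 0 := hδ₄ hx4 hx0
  -- |g x - x| ≤ |x|/2
  have hgx_close : |g x - x| ≤ |x|/2 := by
    have h1 : |g x - x| ≤ |A| * |x|^3 + C₀ * |x|^4 := by
      have he : g x - x = (g x - (x + A * x^3)) + A * x^3 := by ring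
      rw [he]
      calc |(g x - (x + A * x^3)) + A * x^3| ≤ |g x - (x + A * x^3)| + |A * x^3| :=
          abs_add_le _ _
        _ ≤ C₀ * |x|^4 + |A| * |x|^3 := by
            rw [abs_mul, abs_pow]; exact add_le_add hE1 le_rfl
        _ = |A| * |x|^3 + C₀ * |x|^4 := by ring
    have h2 : |A| * |x|^3 ≤ M * |x|^3 :=
      mul_le_mul_of_nonneg_right hAM (by positivity)
    have h3 : C₀ * |x|^4 ≤ M * |x|^3 := by
      calc C₀ * |x|^4 ≤ M * |x|^4 := mul_le_mul_of_nonneg_right hCM (by positivity)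
        _ ≤ M * |x|^3 := mul_le_mul_of_nonneg_left hx43 hMpos.le
    have h4 : M * |x|^3 ≤ (1/2) * |x|^2 := by
      have he : M * |x|^3 = (M * |x|) * |x|^2 := by ring
      rw [he]
      exact mul_le_mul_of_nonneg_right hMx (by positivity)
    have h5 : |x|^2 ≤ (1/2) * |x| := by
      have he : |x|^2 = |x| * |x| := sq (|x|) ▸ by ring
      rw [he]
      exact mul_le_mul_of_nonneg_right hxhalf (abs_nonneg x)
    linarith only [h1, h2, h3, h4, h5]
  -- x * g x ≥ x²/2 and |g x| ≤ 3|x|/2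
  have hxg : x^2/2 ≤ x * g x := by
    have h5 : |x * (g x - x)| ≤ x^2/2 := by
      calc |x * (g x - x)| = |x| * |g x - x| := abs_mul _ _
        _ ≤ |x| * (|x|/2) := mul_le_mul_of_nonneg_left hgx_close (abs_nonneg x)
        _ = x^2/2 := by rw [← sq_abs]; ring
    have h6 := (abs_le.mp h5).1
    linarith only [h6]
  have hgabs : |g x| ≤ 3/2 * |x| := by
    calc |g x| = |x + (g x - x)| := by rw [show x + (g x - x) = g x from by ring]
      _ ≤ |x| + |g x - x| := abs_add_le _ _
      _ ≤ |x| + |x|/2 := by linarith only [hgx_close]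
      _ = 3/2 * |x| := by ring
  -- |G x| ≤ x²
  have hGabs : |G x| ≤ x^2 := by
    have h1 : |G x| ≤ x^2/2 + |A|/4 * |x|^4 + C₀ * |x|^5 := by
      have he : G x = (x^2/2 + A * x^4/4) + (G x - (x^2/2 + A * x^4/4)) := by ring
      rw [he]
      calc |(x^2/2 + A * x^4/4) + (G x - (x^2/2 + A * x^4/4))|
          ≤ |x^2/2 + A * x^4/4| + |G x - (x^2/2 + A * x^4/4)| := abs_add_le _ _
        _ ≤ (x^2/2 + |A|/4 * |x|^4) + C₀ * |x|^5 := by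
            refine add_le_add ?_ hE2
            calc |x^2/2 + A * x^4/4| ≤ |x^2/2| + |A * x^4/4| := abs_add_le _ _
              _ = x^2/2 + |A|/4 * |x|^4 := by
                  rw [abs_of_nonneg (by positivity : (0:ℝ) ≤ x^2/2), abs_div,
                    abs_mul, abs_pow, habs4]
                  rw [abs_of_nonneg (by norm_num : (0:ℝ) ≤ (4:ℝ))]
                  ring
        _ = x^2/2 + |A|/4 * |x|^4 + C₀ * |x|^5 := by ring
    have key24 : M * |x|^4 ≤ (1/4) * |x|^2 := by
      have he : M * |x|^4 = ((M * |x|) * |x|) * |x|^2 := by ring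
      rw [he]
      have h7 : (M * |x|) * |x| ≤ (1/2) * (1/2) :=
        mul_le_mul hMx hxhalf (abs_nonneg x) (by norm_num)
      have := mul_le_mul_of_nonneg_right h7 (by positivity : (0:ℝ) ≤ |x|^2)
      calc ((M * |x|) * |x|) * |x|^2 ≤ (1/2 * (1/2)) * |x|^2 := this
        _ = (1/4) * |x|^2 := by ring
    have h2 : |A|/4 * |x|^4 ≤ M * |x|^4 := by
      apply mul_le_mul_of_nonneg_right _ (by positivity)
      linarith only [hAM, abs_nonneg A]
    have h3 : C₀ * |x|^5 ≤ M * |x|^4 := by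
      calc C₀ * |x|^5 ≤ M * |x|^5 := mul_le_mul_of_nonneg_right hCM (by positivity)
        _ ≤ M * |x|^4 := mul_le_mul_of_nonneg_left hx54 hMpos.le
    have hxx := habs2x
    linarith only [h1, h2, h3, key24, hxx]
  -- key: 2*G x - x * g x ≥ (B/4) * x^4
  have hkey : B/4 * x^4 ≤ 2 * G x - x * g x := by
    have hid : 2 * G x - x * g x = B/2 * x^4 + (2 * (G x - (x^2/2 + A * x^4/4))
        - x * (g x - (x + A * x^3))) := by
      rw [hB_def]; ring
    rw [hid]
    have herr : |2 * (G x - (x^2/2 + A * x^4/4)) - x * (g x - (x + A * x^3))| ≤ 3 * C₀ * |x|^5 := by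
      calc |2 * (G x - (x^2/2 + A * x^4/4)) - x * (g x - (x + A * x^3))|
          ≤ |2 * (G x - (x^2/2 + A * x^4/4))| + |x * (g x - (x + A * x^3))| := abs_sub _ _
        _ ≤ 2 * (C₀ * |x|^5) + |x| * (C₀ * |x|^4) := by
            rw [abs_mul, abs_mul]
            refine add_le_add ?_ ?_
            · simp only [abs_two]
              exact mul_le_mul_of_nonneg_left hE2 (by norm_num)
            · exact mul_le_mul_of_nonneg_left hE1 (abs_nonneg x)
        _ = 3 * C₀ * |x|^5 := by ring
    have hsm : 3 * C₀ * |x|^5 ≤ B/4 * x^4 := by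
      have hC3 : 3 * C₀ * |x| ≤ B/4 := by
        have s1 : 3 * C₀ * |x| ≤ 3 * M * |x| :=
          mul_le_mul_of_nonneg_right (by linarith only [hCM]) (abs_nonneg x)
        have s2 : 3 * M * |x| ≤ 3 * M * (B/(16*M)) :=
          mul_le_mul_of_nonneg_left hx7 (by positivity)
        have s3 : 3 * M * (B/(16*M)) = 3 * B / 16 := by
          field_simp
        have s4 : 3 * B / 16 ≤ B / 4 := by linarith only [hB]
        linarith only [s1, s2, s3.le, s3.ge, s4]
      calc 3 * C₀ * |x|^5 = (3 * C₀ * |x|) * |x|^4 := by ring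
        _ ≤ (B/4) * |x|^4 := mul_le_mul_of_nonneg_right hC3 (by positivity)
        _ = B/4 * x^4 := by rw [habs4]
    have h8 := (abs_le.mp herr).1
    linarith only [h8, hsm]
  -- g x / x ≥ 1/2
  have hgdiv : (1:ℝ)/2 ≤ g x / x := by
    have hx2pos : 0 < x^2 := by positivity
    have he : g x / x = (x * g x) / x^2 := by
      field_simp
    rw [he, le_div_iff₀ hx2pos]
    linarith only [hxg]
  -- the main inequality: g² + (c/5) g³ G < 2 g G / x
  have hS : g x ^ 2 + (c/5) * g x ^ 3 * G x < 2 * g x * G x / x := by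
    have hSeq : 2 * g x * G x / x - g x ^ 2 - (c/5) * g x ^ 3 * G x
        = (g x / x) * (2 * G x - x * g x) - (c/5) * g x ^ 3 * G x := by
      field_simp
    have hterm1 : (1:ℝ)/2 * (B/4 * x^4) ≤ (g x / x) * (2 * G x - x * g x) :=
      mul_le_mul hgdiv hkey (by positivity) (by linarith only [hgdiv])
    have hterm2 : |(c/5) * g x ^ 3 * G x| ≤ B/16 * x^4 := by
      have he : |(c/5) * g x ^ 3 * G x| = |c|/5 * |g x|^3 * |G x| := by
        rw [abs_mul, abs_mul, abs_div, abs_pow]; norm_num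
      rw [he]
      have hg3 : |g x|^3 ≤ 27/8 * |x|^3 := by
        calc |g x|^3 ≤ (3/2 * |x|)^3 := pow_le_pow_left₀ (abs_nonneg _) hgabs 3
          _ = 27/8 * |x|^3 := by ring
      have hstep1 : |c|/5 * |g x|^3 * |G x| ≤ |c|/5 * (27/8 * |x|^3) * x^2 := by
        apply mul_le_mul _ hGabs (abs_nonneg _) (by positivity)
        exact mul_le_mul_of_nonneg_left hg3 (by positivity)
      have hstep2 : |c|/5 * (27/8 * |x|^3) * x^2 = 27/40 * |c| * (|x| * (|x|^2 * x^2)) := by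
        ring
      have hstep3 : 27/40 * |c| * (|x| * (|x|^2 * x^2)) ≤
          27/40 * M * ((B/(16*M)) * (|x|^2 * x^2)) := by
        apply mul_le_mul (by linarith only [hcM]) _ (by positivity) (by positivity)
        exact mul_le_mul_of_nonneg_right hx7 (by positivity)
      have hstep4 : 27/40 * M * ((B/(16*M)) * (|x|^2 * x^2)) = 27/640 * B * x^4 := by
        rw [habs2x]
        field_simp
        ring
      have hstep5 : 27/640 * B * x^4 ≤ B/16 * x^4 := by
        have := mul_nonneg hB.le hx4pos.le
        linarith only [this]
      linarith only [hstep1, hstep2.le, hstep3, hstep4.le, hstep5]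
    have h9 := (abs_le.mp hterm2).2
    have h10 : 0 < 2 * g x * G x / x - g x ^ 2 - (c/5) * g x ^ 3 * G x := by
      rw [hSeq]
      have h11 : 0 < B/16 * x^4 := by positivity
      linarith only [hterm1, h9, h11]
    linarith only [h10]
  -- divide by 2 G x > 0 : deriv g x < g x / x
  have hderiv_lt : deriv g x < g x / x := by
    have he : 2 * g x * G x / x = 2 * G x * (g x / x) := by ring
    have h2' : 2 * G x * deriv g x < 2 * G x * (g x / x) := by
      rw [← he]
      linarith only [hhyp, hS]
    exact lt_of_mul_lt_mul_left h2' (by linarith only [hGx])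
  -- compute the derivative of g y / y
  have hdiff : DifferentiableAt ℝ g x := (hδ₂ hx2).differentiableAt
  have hdrv : deriv (fun y => g y / y) x = (deriv g x * x - g x * 1) / x^2 := by
    have := deriv_div hdiff (differentiableAt_id : DifferentiableAt ℝ (fun y : ℝ => y) x) hx0
    rw [show (fun y => g y / y) = g / id from rfl, this]; simp
  rw [hdrv]
  have heq2 : x * ((deriv g x * x - g x * 1) / x^2) = deriv g x - g x / x := by
    field_simp
  rw [heq2]
  linarith only [hderiv_lt]
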